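/- Let V be a Borel vector field on [0,T] × ℝ^d and let B ⊆ [0,T] × ℝ^d be a Borel set such that for each (S,x) ∈ B there exists one and only one solution γ of the ODE γ' = V(t,γ) on [0,T] with γ(S) = x. Then the flow map X(S,t,x) := γ(t) (where γ is the unique solution with γ(S)=x) is Borel measurable on the set {(S,t,x) : (S,x) ∈ B, t ∈ [0,T]}. -/

import Mathlib

open MeasureTheory Set
open scoped ENNReal NNReal Topology

noncomputable section

open Filter in
/-- Countable reduction: the integral equation holds on all of `[0,T]`
as soon as it holds at rational points and at `T`. -/
lemma key_rat {E : Type*} [NormedAddCommGroup E] [NormedSpace ℝ E]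
    (T : ℝ) (hT : 0 ≤ T) (u : ℝ → E) (hu : Continuous u) (g : ℝ → E)
    (H : ∀ q ∈ Set.Icc (0:ℝ) T, ((∃ r : ℚ, (r:ℝ) = q) ∨ q = T) →
      u q - u 0 = ∫ s in (0:ℝ)..q, g s) :
    ∀ t ∈ Set.Icc (0:ℝ) T, u t - u 0 = ∫ s in (0:ℝ)..t, g s := by
  intro t ht
  rcases eq_or_lt_of_le ht.1 with h0 | h0
  · exact h0 ▸ H 0 ⟨le_rfl, hT⟩ (Or.inl ⟨0, by norm_num⟩)
  by_cases hint : IntegrableOn g (Set.Ioc 0 t) volume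
  · have hicc : IntegrableOn g (Set.Icc 0 t) := (integrableOn_Icc_iff_integrableOn_Ioc (f := g)).2 hint
    have hcont : ContinuousOn (fun x => ∫ s in Set.Ioc 0 x, g s) (Set.Icc 0 t) :=
      intervalIntegral.continuousOn_primitive hicc
    have hex : ∀ n : ℕ, ∃ r : ℚ, max 0 (t - 1/(n+1)) < (r:ℝ) ∧ (r:ℝ) < t := by
      intro n
      apply exists_rat_btwn
      apply max_lt h0
      have : (0:ℝ) < 1/(n+1) := by positivity
      linarith
    choose r hr1 hr2 using hex
    have hrmem : ∀ n, (r n : ℝ) ∈ Set.Icc (0:ℝ) t :=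
      fun n => ⟨le_of_lt (lt_of_le_of_lt (le_max_left _ _) (hr1 n)), (hr2 n).le⟩
    have hrT : ∀ n, (r n : ℝ) ∈ Set.Icc (0:ℝ) T :=
      fun n => ⟨(hrmem n).1, (hrmem n).2.trans ht.2⟩
    have hlim : Tendsto (fun n : ℕ => (r n : ℝ)) atTop (𝓝 t) := by
      have hlow : Tendsto (fun n : ℕ => max 0 (t - 1/(n+1:ℝ))) atTop (𝓝 t) := by
        have h1 : Tendsto (fun n : ℕ => t - 1/(n+1:ℝ)) atTop (𝓝 (t - 0)) :=
          tendsto_const_nhds.sub tendsto_one_div_add_atTop_nhds_zero_nat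
        have := (tendsto_const_nhds : Filter.Tendsto (fun _ : ℕ => (0:ℝ)) atTop (𝓝 0)).max h1
        simpa [max_eq_right ht.1] using this
      exact tendsto_of_tendsto_of_tendsto_of_le_of_le hlow tendsto_const_nhds
        (fun n => (hr1 n).le) (fun n => (hr2 n).le)
    have hseq : ∀ n, u (r n : ℝ) - u 0 = ∫ s in Set.Ioc 0 (r n : ℝ), g s := by
      intro n
      rw [← intervalIntegral.integral_of_le (hrmem n).1]
      exact H _ (hrT n) (Or.inl ⟨r n, rfl⟩)
    have h1 : Tendsto (fun n => u (r n : ℝ) - u 0) atTop (𝓝 (u t - u 0)) :=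
      ((hu.tendsto t).comp hlim).sub tendsto_const_nhds
    have h2 : Tendsto (fun n => ∫ s in Set.Ioc 0 (r n : ℝ), g s) atTop
        (𝓝 (∫ s in Set.Ioc 0 t, g s)) := by
      have hc := (hcont t (Set.right_mem_Icc.2 ht.1)).tendsto
      exact hc.comp (tendsto_nhdsWithin_of_tendsto_nhds_of_eventually_within _ hlim
        (Filter.Eventually.of_forall hrmem))
    rw [intervalIntegral.integral_of_le ht.1]
    exact tendsto_nhds_unique (h1.congr hseq) h2
  · have hzero : ∫ s in (0:ℝ)..t, g s = 0 := by
      apply intervalIntegral.integral_undef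
      rw [intervalIntegrable_iff_integrableOn_Ioc_of_le ht.1]
      exact hint
    rw [hzero, sub_eq_zero]
    rcases eq_or_lt_of_le ht.2 with hTt | hTt
    · have h := H t ht (Or.inr hTt)
      rw [hzero] at h
      exact sub_eq_zero.mp h
    · have hex : ∀ n : ℕ, ∃ r' : ℚ, t < (r':ℝ) ∧ (r':ℝ) < min T (t + 1/(n+1)) := by
        intro n
        apply exists_rat_btwn
        apply lt_min hTt
        have : (0:ℝ) < 1/(n+1) := by positivity
        linarith
      choose r hr1 hr2 using hex
      have hrT : ∀ n, (r n : ℝ) ∈ Set.Icc (0:ℝ) T :=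
        fun n => ⟨ht.1.trans (hr1 n).le, ((hr2 n).trans_le (min_le_left _ _)).le⟩
      have hnint : ∀ n, ¬ IntegrableOn g (Set.Ioc 0 (r n : ℝ)) volume :=
        fun n h => hint (h.mono_set (Set.Ioc_subset_Ioc le_rfl (hr1 n).le))
      have hval : ∀ n, u (r n : ℝ) = u 0 := by
        intro n
        have h := H _ (hrT n) (Or.inl ⟨r n, rfl⟩)
        rw [intervalIntegral.integral_undef (by
          rw [intervalIntegrable_iff_integrableOn_Ioc_of_le (hrT n).1]
          exact hnint n)] at h
        exact sub_eq_zero.mp h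
      have hlim : Tendsto (fun n : ℕ => (r n : ℝ)) atTop (𝓝 t) := by
        have hup : Tendsto (fun n : ℕ => min T (t + 1/(n+1:ℝ))) atTop (𝓝 t) := by
          have h1 : Tendsto (fun n : ℕ => t + 1/(n+1:ℝ)) atTop (𝓝 (t + 0)) :=
            tendsto_const_nhds.add tendsto_one_div_add_atTop_nhds_zero_nat
          have := (tendsto_const_nhds : Filter.Tendsto (fun _ : ℕ => T) atTop (𝓝 T)).min h1
          simpa [min_eq_right ht.2] using this
        exact tendsto_of_tendsto_of_tendsto_of_le_of_le tendsto_const_nhds hup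
          (fun n => (hr1 n).le) (fun n => (hr2 n).le)
      exact tendsto_nhds_unique ((hu.tendsto t).comp hlim)
        (tendsto_const_nhds.congr (fun n => (hval n).symm))

/-- A solution of the ODE `γ' = V(t,γ)` on `[0,T]`, in integral form. -/
def IsSolution {d : ℕ} (T : ℝ) (hT : 0 ≤ T)
    (V : ℝ → EuclideanSpace ℝ (Fin d) → EuclideanSpace ℝ (Fin d))
    (γ : C(Set.Icc (0:ℝ) T, EuclideanSpace ℝ (Fin d))) : Prop :=
  ∀ t : Set.Icc (0:ℝ) T,
    γ t - γ ⟨0, Set.left_mem_Icc.mpr hT⟩ =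
      ∫ s in (0:ℝ)..(t:ℝ), V s (γ (Set.projIcc 0 T hT s))

set_option maxHeartbeats 2000000 in
set_option synthInstance.maxHeartbeats 1000000 in
theorem stmt2 (d : ℕ) (T : ℝ) (hT : 0 ≤ T)
    (V : ℝ → EuclideanSpace ℝ (Fin d) → EuclideanSpace ℝ (Fin d))
    (hV : Measurable (Function.uncurry V))
    (B : Set (ℝ × EuclideanSpace ℝ (Fin d)))
    (hB : MeasurableSet B)
    (hBsub : ∀ p ∈ B, p.1 ∈ Set.Icc (0:ℝ) T)
    (huniq : ∀ p : ℝ × EuclideanSpace ℝ (Fin d), ∀ hp : p ∈ B,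
      ∃! γ : C(Set.Icc (0:ℝ) T, EuclideanSpace ℝ (Fin d)),
        IsSolution T hT V γ ∧ γ ⟨p.1, hBsub p hp⟩ = p.2) :
    ∃ X : ℝ × ℝ × EuclideanSpace ℝ (Fin d) → EuclideanSpace ℝ (Fin d),
      Measurable (fun q : {q : ℝ × ℝ × EuclideanSpace ℝ (Fin d) //
          (q.1, q.2.2) ∈ B ∧ q.2.1 ∈ Set.Icc (0:ℝ) T} => X q.1) ∧
      ∀ (S t : ℝ) (x : EuclideanSpace ℝ (Fin d)) (hSx : (S, x) ∈ B)
        (ht : t ∈ Set.Icc (0:ℝ) T)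
        (γ : C(Set.Icc (0:ℝ) T, EuclideanSpace ℝ (Fin d))),
        IsSolution T hT V γ → γ ⟨S, hBsub _ hSx⟩ = x →
        X (S, t, x) = γ ⟨t, ht⟩ := by
  classical
  letI : MeasurableSpace C(Set.Icc (0:ℝ) T, EuclideanSpace ℝ (Fin d)) := borel _
  haveI : BorelSpace C(Set.Icc (0:ℝ) T, EuclideanSpace ℝ (Fin d)) := ⟨rfl⟩
  haveI : StandardBorelSpace C(Set.Icc (0:ℝ) T, EuclideanSpace ℝ (Fin d)) := inferInstance
  haveI : MeasurableSpace.CountablySeparated (ℝ × EuclideanSpace ℝ (Fin d)) :=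
    MeasurableSpace.countablySeparated_of_separatesPoints
  -- the evaluation-composed vector field is jointly measurable
  have hVmeas : Measurable (fun p : C(Set.Icc (0:ℝ) T, EuclideanSpace ℝ (Fin d)) × ℝ =>
      V p.2 (p.1 (Set.projIcc 0 T hT p.2))) := by
    have hc2 : Continuous (fun p : C(Set.Icc (0:ℝ) T, EuclideanSpace ℝ (Fin d)) × ℝ =>
        ((p.1 : C(Set.Icc (0:ℝ) T, EuclideanSpace ℝ (Fin d))), Set.projIcc 0 T hT p.2)) :=
      continuous_fst.prodMk (continuous_projIcc.comp continuous_snd)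
    have hc : Continuous (fun p : C(Set.Icc (0:ℝ) T, EuclideanSpace ℝ (Fin d)) × ℝ =>
        (p.2, p.1 (Set.projIcc 0 T hT p.2))) :=
      continuous_snd.prodMk (ContinuousEval.continuous_eval.comp hc2)
    exact hV.comp hc.measurable
  -- the solution set, characterized by countably many conditions
  have hSolEq : ∀ γ : C(Set.Icc (0:ℝ) T, EuclideanSpace ℝ (Fin d)),
      IsSolution T hT V γ ↔
        ∀ q ∈ (Set.range ((↑) : ℚ → ℝ) ∩ Set.Icc 0 T) ∪ {T},
          γ (Set.projIcc 0 T hT q) - γ ⟨0, Set.left_mem_Icc.mpr hT⟩ =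
            ∫ s in (0:ℝ)..q, V s (γ (Set.projIcc 0 T hT s)) := by
    intro γ
    constructor
    · intro hsol q hq
      have hqIcc : q ∈ Set.Icc (0:ℝ) T := by
        rcases hq with hq | hq
        · exact hq.2
        · rw [Set.mem_singleton_iff] at hq
          subst hq
          exact Set.right_mem_Icc.2 hT
      have := hsol ⟨q, hqIcc⟩
      rwa [Set.projIcc_of_mem hT hqIcc]
    · intro h
      have H : ∀ q ∈ Set.Icc (0:ℝ) T, ((∃ r : ℚ, (r:ℝ) = q) ∨ q = T) →
          (fun t => γ (Set.projIcc 0 T hT t)) q - (fun t => γ (Set.projIcc 0 T hT t)) 0 =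
            ∫ s in (0:ℝ)..q, V s (γ (Set.projIcc 0 T hT s)) := by
        intro q hq hq'
        have hmem : q ∈ (Set.range ((↑) : ℚ → ℝ) ∩ Set.Icc 0 T) ∪ {T} := by
          rcases hq' with ⟨rr, hrr⟩ | rfl
          · exact Or.inl ⟨⟨rr, hrr⟩, hq⟩
          · exact Or.inr rfl
        have h0 : Set.projIcc 0 T hT 0 = ⟨0, Set.left_mem_Icc.mpr hT⟩ :=
          Set.projIcc_of_mem hT (Set.left_mem_Icc.mpr hT)
        simpa [h0] using h q hmem
      have hkey := key_rat T hT _ (γ.continuous.comp continuous_projIcc) _ H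
      intro t
      have h0 : Set.projIcc 0 T hT 0 = ⟨0, Set.left_mem_Icc.mpr hT⟩ :=
        Set.projIcc_of_mem hT (Set.left_mem_Icc.mpr hT)
      have := hkey t.1 t.2
      simpa [h0, Set.projIcc_val] using this
  have hSol : MeasurableSet {γ : C(Set.Icc (0:ℝ) T, EuclideanSpace ℝ (Fin d)) |
      IsSolution T hT V γ} := by
    have hset : {γ : C(Set.Icc (0:ℝ) T, EuclideanSpace ℝ (Fin d)) | IsSolution T hT V γ} =
        ⋂ q ∈ (Set.range ((↑) : ℚ → ℝ) ∩ Set.Icc 0 T) ∪ {T},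
          {γ : C(Set.Icc (0:ℝ) T, EuclideanSpace ℝ (Fin d)) |
            γ (Set.projIcc 0 T hT q) - γ ⟨0, Set.left_mem_Icc.mpr hT⟩ =
              ∫ s in (0:ℝ)..q, V s (γ (Set.projIcc 0 T hT s))} := by
      ext γ
      simp only [Set.mem_setOf_eq, Set.mem_iInter]
      exact hSolEq γ
    rw [hset]
    refine MeasurableSet.biInter
      (((Set.countable_range _).mono Set.inter_subset_left).union (Set.countable_singleton T)) ?_
    intro q hq
    have hq0 : 0 ≤ q := by
      rcases hq with hq | hq
      · exact hq.2.1
      · rw [Set.mem_singleton_iff] at hq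
        subst hq
        exact hT
    have hL : Measurable fun γ : C(Set.Icc (0:ℝ) T, EuclideanSpace ℝ (Fin d)) =>
        γ (Set.projIcc 0 T hT q) - γ ⟨0, Set.left_mem_Icc.mpr hT⟩ :=
      ((continuous_eval_const _).measurable).sub ((continuous_eval_const _).measurable)
    have hR : Measurable fun γ : C(Set.Icc (0:ℝ) T, EuclideanSpace ℝ (Fin d)) =>
        ∫ s in (0:ℝ)..q, V s (γ (Set.projIcc 0 T hT s)) := by
      have h1 : (fun γ : C(Set.Icc (0:ℝ) T, EuclideanSpace ℝ (Fin d)) =>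
            ∫ s in (0:ℝ)..q, V s (γ (Set.projIcc 0 T hT s)))
          = fun γ : C(Set.Icc (0:ℝ) T, EuclideanSpace ℝ (Fin d)) =>
            ∫ s, V s (γ (Set.projIcc 0 T hT s)) ∂(volume.restrict (Set.Ioc 0 q)) := by
        funext γ
        rw [intervalIntegral.integral_of_le hq0]
      rw [h1]
      exact (hVmeas.stronglyMeasurable.integral_prod_right').measurable
    exact measurableSet_eq_fun hL hR
  -- the injection from (initial time, solution) pairs
  set Φ : ℝ × C(Set.Icc (0:ℝ) T, EuclideanSpace ℝ (Fin d)) → ℝ × EuclideanSpace ℝ (Fin d) :=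
    fun p => (p.1, p.2 (Set.projIcc 0 T hT p.1)) with hΦdef
  have hΦc2 : Continuous fun p : ℝ × C(Set.Icc (0:ℝ) T, EuclideanSpace ℝ (Fin d)) => ((p.2 : C(Set.Icc (0:ℝ) T, EuclideanSpace ℝ (Fin d))), Set.projIcc 0 T hT p.1) :=
    continuous_snd.prodMk (continuous_projIcc.comp continuous_fst)
  have hΦc : Continuous Φ :=
    continuous_fst.prodMk (ContinuousEval.continuous_eval.comp hΦc2)
  set D : Set (ℝ × C(Set.Icc (0:ℝ) T, EuclideanSpace ℝ (Fin d))) := {p | IsSolution T hT V p.2 ∧ Φ p ∈ B} with hDdef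
  have hD : MeasurableSet D := (measurable_snd hSol).inter (hΦc.measurable hB)
  haveI := hD.standardBorel
  set e : D → ℝ × EuclideanSpace ℝ (Fin d) := fun p => Φ p.1 with hedef
  have he_meas : Measurable e := hΦc.measurable.comp measurable_subtype_coe
  have he_inj : Function.Injective e := by
    rintro ⟨⟨S₁, γ₁⟩, h₁⟩ ⟨⟨S₂, γ₂⟩, h₂⟩ hee
    simp only [hedef, hΦdef, Prod.mk.injEq] at hee
    obtain ⟨hS, hx⟩ := hee
    subst hS
    have hBmem : (S₁, γ₁ (Set.projIcc 0 T hT S₁)) ∈ B := h₁.2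
    have hSIcc : S₁ ∈ Set.Icc (0:ℝ) T := hBsub _ hBmem
    have hproj : Set.projIcc 0 T hT S₁ = ⟨S₁, hSIcc⟩ := Set.projIcc_of_mem hT hSIcc
    obtain ⟨γ₀, -, huu⟩ := huniq _ hBmem
    have e1 : γ₁ = γ₀ := huu γ₁ ⟨h₁.1, by rw [← hproj]⟩
    have e2 : γ₂ = γ₀ := huu γ₂ ⟨h₂.1, by rw [← hproj]; exact hx.symm⟩
    exact Subtype.ext (Prod.ext rfl (e1.trans e2.symm))
  have hemb : MeasurableEmbedding e := he_meas.measurableEmbedding he_inj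
  have hrange : Set.range e = B := by
    ext b
    constructor
    · rintro ⟨⟨⟨S, γ⟩, hp⟩, rfl⟩
      exact hp.2
    · intro hb
      obtain ⟨γ, ⟨hsol, hval⟩, -⟩ := huniq b hb
      have hSIcc : b.1 ∈ Set.Icc (0:ℝ) T := hBsub b hb
      have hproj : Set.projIcc 0 T hT b.1 = ⟨b.1, hSIcc⟩ := Set.projIcc_of_mem hT hSIcc
      have hx : γ (Set.projIcc 0 T hT b.1) = b.2 := by rw [hproj]; exact hval
      refine ⟨⟨(b.1, γ), ⟨hsol, ?_⟩⟩, ?_⟩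
      · show (b.1, γ (Set.projIcc 0 T hT b.1)) ∈ B
        rw [hx]
        exact hb
      · show (b.1, γ (Set.projIcc 0 T hT b.1)) = b
        rw [hx]
  set ψ : B → D := fun b => Set.rangeSplitting e ⟨b.1, by rw [hrange]; exact b.2⟩ with hψdef
  have hψmeas : Measurable ψ :=
    hemb.measurable_rangeSplitting.comp (measurable_subtype_coe.subtype_mk)
  have hψval : ∀ b : B, e (ψ b) = (b : ℝ × EuclideanSpace ℝ (Fin d)) := by
    intro b
    exact Set.apply_rangeSplitting e ⟨b.1, by rw [hrange]; exact b.2⟩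
  refine ⟨fun q => if h : (q.1, q.2.2) ∈ B
      then ((ψ ⟨(q.1, q.2.2), h⟩ : D).1.2) (Set.projIcc 0 T hT q.2.1) else 0, ?_, ?_⟩
  · have hXeq : (fun q : {q : ℝ × ℝ × EuclideanSpace ℝ (Fin d) //
          (q.1, q.2.2) ∈ B ∧ q.2.1 ∈ Set.Icc (0:ℝ) T} =>
          if h : ((q:ℝ × ℝ × EuclideanSpace ℝ (Fin d)).1, (q:ℝ × ℝ × EuclideanSpace ℝ (Fin d)).2.2) ∈ B
          then ((ψ ⟨((q:ℝ × ℝ × EuclideanSpace ℝ (Fin d)).1, (q:ℝ × ℝ × EuclideanSpace ℝ (Fin d)).2.2), h⟩ : D).1.2)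
            (Set.projIcc 0 T hT (q:ℝ × ℝ × EuclideanSpace ℝ (Fin d)).2.1) else 0)
        = fun q => ((ψ ⟨(q.1.1, q.1.2.2), q.2.1⟩ : D).1.2) (Set.projIcc 0 T hT q.1.2.1) := by
      funext q
      rw [dif_pos q.2.1]
    rw [hXeq]
    have hm1 : Measurable fun q : {q : ℝ × ℝ × EuclideanSpace ℝ (Fin d) //
        (q.1, q.2.2) ∈ B ∧ q.2.1 ∈ Set.Icc (0:ℝ) T} => (ψ ⟨(q.1.1, q.1.2.2), q.2.1⟩ : D) := by
      apply hψmeas.comp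
      exact ((measurable_fst.comp measurable_subtype_coe).prodMk
        (measurable_snd.comp (measurable_snd.comp measurable_subtype_coe))).subtype_mk
    have hm2 : Measurable fun q : {q : ℝ × ℝ × EuclideanSpace ℝ (Fin d) //
        (q.1, q.2.2) ∈ B ∧ q.2.1 ∈ Set.Icc (0:ℝ) T} =>
        (((ψ ⟨(q.1.1, q.1.2.2), q.2.1⟩ : D).1.2 : C(Set.Icc (0:ℝ) T, EuclideanSpace ℝ (Fin d))), q.1.2.1) :=
      (measurable_snd.comp (measurable_subtype_coe.comp hm1)).prodMk
        (measurable_fst.comp (measurable_snd.comp measurable_subtype_coe))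
    have heval2 : Continuous fun p : C(Set.Icc (0:ℝ) T, EuclideanSpace ℝ (Fin d)) × ℝ => ((p.1 : C(Set.Icc (0:ℝ) T, EuclideanSpace ℝ (Fin d))), Set.projIcc 0 T hT p.2) :=
      continuous_fst.prodMk (continuous_projIcc.comp continuous_snd)
    have heval : Measurable fun p : C(Set.Icc (0:ℝ) T, EuclideanSpace ℝ (Fin d)) × ℝ => p.1 (Set.projIcc 0 T hT p.2) :=
      (ContinuousEval.continuous_eval.comp heval2).measurable
    exact heval.comp hm2
  · intro S t x hSx ht γ hγ hγS
    have hSIcc : S ∈ Set.Icc (0:ℝ) T := hBsub (S, x) hSx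
    have hproj : Set.projIcc 0 T hT S = ⟨S, hSIcc⟩ := Set.projIcc_of_mem hT hSIcc
    have he := hψval ⟨(S, x), hSx⟩
    have h1 : ((ψ ⟨(S, x), hSx⟩ : D) : ℝ × C(Set.Icc (0:ℝ) T, EuclideanSpace ℝ (Fin d))).1 = S := congrArg Prod.fst he
    have h2 : ((ψ ⟨(S, x), hSx⟩ : D) : ℝ × C(Set.Icc (0:ℝ) T, EuclideanSpace ℝ (Fin d))).2
        (Set.projIcc 0 T hT ((ψ ⟨(S, x), hSx⟩ : D) : ℝ × C(Set.Icc (0:ℝ) T, EuclideanSpace ℝ (Fin d))).1) = x := congrArg Prod.snd he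
    rw [h1] at h2
    obtain ⟨γ₀, -, huu⟩ := huniq (S, x) hSx
    have eγ : γ = γ₀ := huu γ ⟨hγ, hγS⟩
    have eψ : ((ψ ⟨(S, x), hSx⟩ : D) : ℝ × C(Set.Icc (0:ℝ) T, EuclideanSpace ℝ (Fin d))).2 = γ₀ := by
      refine huu _ ⟨(ψ ⟨(S, x), hSx⟩ : D).2.1, ?_⟩
      rw [← hproj]
      exact h2
    show (if h : (S, x) ∈ B
        then ((ψ ⟨(S, x), h⟩ : D).1.2) (Set.projIcc 0 T hT t) else 0) = γ ⟨t, ht⟩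
    rw [dif_pos hSx, eψ, ← eγ, Set.projIcc_of_mem hT ht]
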